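/- The following are equivalent: (i) 𝔖(Q) is contained in the cyclic group ⟨σ⟩ generated by the q-cycle σ (equivalently, every element of Q is a rotation); (ii) H is abelian; (iii) W = ⟨σ, 𝔖(Q)⟩ is abelian. -/

import Mathlib

open Equiv

noncomputable section

/-- The circle `ℝ/ℤ`. -/
abbrev Circ : Type := AddCircle (1 : ℝ)

/-- Rotation by `a` : the bijection `x ↦ x + a` of the circle. -/
def Rot (a : Circ) : Equiv.Perm Circ := Equiv.addRight a

/-- The subgroup `{ p/q mod 1 : p ∈ ℤ }` of the circle. -/
def RatPts (q : ℕ) : AddSubgroup Circ :=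
  AddSubgroup.zmultiples (((q : ℝ)⁻¹ : ℝ) : Circ)

/-- The group of bijections of the circle all of whose displacements lie in `RatPts q`. -/
def Delta (q : ℕ) : Subgroup (Equiv.Perm Circ) where
  carrier := {f | ∀ x : Circ, f x - x ∈ RatPts q}
  one_mem' := by intro x; simpa using zero_mem (RatPts q)
  mul_mem' := by
    intro f g hf hg x
    have h1 : f (g x) - g x ∈ RatPts q := hf (g x)
    have h2 : g x - x ∈ RatPts q := hg x
    have h3 := add_mem h1 h2
    simpa [Equiv.Perm.mul_apply, sub_add_sub_cancel] using h3
  inv_mem' := by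
    intro f hf x
    have h1 : f (f⁻¹ x) - f⁻¹ x ∈ RatPts q := hf (f⁻¹ x)
    rw [show f (f⁻¹ x) = x from f.apply_symm_apply x] at h1
    simpa using neg_mem h1

/-- The subgroup `A` of the circle generated by the classes of `α₁, …, α_s`. -/
def Agrp (s : ℕ) (α : Fin s → ℝ) : AddSubgroup Circ :=
  AddSubgroup.closure (Set.range fun i => ((α i : ℝ) : Circ))

/-- The group `H` generated by the rotations `R_{αᵢ}` and the maps `E_{τⱼ}`. -/
def Hgrp (s m q : ℕ) (α : Fin s → ℝ) (τs : Fin m → Equiv.Perm (Fin q))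
    (E : Equiv.Perm (Fin q) → Equiv.Perm Circ) : Subgroup (Equiv.Perm Circ) :=
  Subgroup.closure ((Set.range fun i => Rot ((α i : ℝ) : Circ)) ∪ (Set.range fun j => E (τs j)))

/-- The group `Q` generated by the maps `E_{τⱼ}`. -/
def Qgrp (m q : ℕ) (τs : Fin m → Equiv.Perm (Fin q))
    (E : Equiv.Perm (Fin q) → Equiv.Perm Circ) : Subgroup (Equiv.Perm Circ) :=
  Subgroup.closure (Set.range fun j => E (τs j))

/-- The subgroup `𝔖(Q)` of `S_q` generated by `τ₁, …, τ_m`. -/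
def SQgrp (m q : ℕ) (τs : Fin m → Equiv.Perm (Fin q)) : Subgroup (Equiv.Perm (Fin q)) :=
  Subgroup.closure (Set.range τs)

/-- The subgroup `W = ⟨σ, τ₁, …, τ_m⟩` of `S_q`, where `σ` is the `q`-cycle. -/
def Wgrp (m q : ℕ) (τs : Fin m → Equiv.Perm (Fin q)) : Subgroup (Equiv.Perm (Fin q)) :=
  Subgroup.closure ({finRotate q} ∪ Set.range τs)

set_option linter.unusedSectionVars false

lemma circ_eq_iff {x y : ℝ} : (↑x : Circ) = ↑y ↔ ∃ k : ℤ, x - y = k := by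
  rw [← sub_eq_zero, ← AddCircle.coe_sub, AddCircle.coe_eq_zero_iff]
  simp [eq_comm]

lemma rep {q : ℕ} (hq : 0 < q) (x : Circ) :
    ∃ (i : Fin q) (t : ℝ), 0 ≤ t ∧ t < 1/q ∧ x = ((((i : ℕ) : ℝ)/q + t : ℝ) : Circ) := by
  have hq' : (0:ℝ) < q := by exact_mod_cast hq
  obtain ⟨r, rfl⟩ := QuotientAddGroup.mk_surjective x
  set r' := Int.fract r with hr'
  have h0 : (0:ℝ) ≤ r' := Int.fract_nonneg r
  have h1 : r' < 1 := Int.fract_lt_one r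
  have hiq : ⌊r' * q⌋.toNat < q := by
    have : r' * q < q := by nlinarith
    have h2 : ⌊r' * q⌋ < (q:ℤ) := by
      rw [Int.floor_lt]; exact_mod_cast this
    omega
  refine ⟨⟨⌊r' * q⌋.toNat, hiq⟩, r' - (⌊r' * q⌋.toNat : ℝ)/q, ?_, ?_, ?_⟩
  · have h3 : ((⌊r' * q⌋.toNat : ℝ)) ≤ r' * q := by
      have h4 : (⌊r' * q⌋ : ℝ) ≤ r' * q := Int.floor_le _
      have h5 : (⌊r' * q⌋.toNat : ℤ) = ⌊r' * q⌋ := Int.toNat_of_nonneg (by positivity)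
      calc ((⌊r' * q⌋.toNat : ℝ)) = ((⌊r' * q⌋ : ℤ) : ℝ) := by exact_mod_cast congrArg (Int.cast : ℤ → ℝ) h5
        _ ≤ r' * q := h4
    rw [sub_nonneg, div_le_iff₀ hq']; linarith
  · have h4 : r' * q < (⌊r' * q⌋ : ℝ) + 1 := Int.lt_floor_add_one _
    have h5 : (⌊r' * q⌋.toNat : ℤ) = ⌊r' * q⌋ := Int.toNat_of_nonneg (by positivity)
    have h6 : r' * q < (⌊r' * q⌋.toNat : ℝ) + 1 := by
      have : ((⌊r' * q⌋.toNat : ℝ)) = ((⌊r' * q⌋ : ℤ) : ℝ) := by exact_mod_cast congrArg (Int.cast : ℤ → ℝ) h5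
      linarith
    rw [sub_lt_iff_lt_add, ← add_div, lt_div_iff₀ hq']; nlinarith
  · rw [circ_eq_iff]
    refine ⟨⌊r⌋, ?_⟩
    have : ((⟨⌊r' * q⌋.toNat, hiq⟩ : Fin q) : ℕ) = ⌊r' * q⌋.toNat := rfl
    rw [this]
    have : r - ((⌊r' * q⌋.toNat : ℝ)/q + (r' - (⌊r' * q⌋.toNat : ℝ)/q)) = r - r' := by ring
    rw [this, hr', Int.self_sub_fract]

lemma Rot_apply (a x : Circ) : Rot a x = x + a := rfl

lemma Rot_mul (a b : Circ) : Rot a * Rot b = Rot (a + b) := by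
  ext x; simp [Rot_apply, Equiv.Perm.mul_apply, add_assoc, add_comm a b]

def RotHom : Multiplicative Circ →* Equiv.Perm Circ :=
  MonoidHom.mk' (fun a => Rot a.toAdd) (fun a b => by
    beta_reduce
    rw [Rot_mul]
    congr 1)

lemma Rot_zpow (a : Circ) (n : ℤ) : Rot a ^ n = Rot (n • a) := by
  have h1 : Rot a = RotHom (Multiplicative.ofAdd a) := rfl
  rw [h1, ← map_zpow, ← ofAdd_zsmul]; rfl


section E
variable {q : ℕ} {E : Equiv.Perm (Fin q) → Equiv.Perm Circ}
  (hE : ∀ (τ : Equiv.Perm (Fin q)) (i : Fin q) (t : ℝ), 0 ≤ t → t < 1 / q →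
      E τ ((((i : ℕ) : ℝ) / q + t : ℝ) : Circ) = ((((τ i : ℕ) : ℝ) / q + t : ℝ) : Circ))

include hE

lemma E_mul (hq : 0 < q) (τ τ' : Perm (Fin q)) : E (τ * τ') = E τ * E τ' := by
  ext x
  obtain ⟨i, t, ht0, ht1, rfl⟩ := rep hq x
  rw [Perm.mul_apply, hE τ' i t ht0 ht1, hE τ (τ' i) t ht0 ht1, hE (τ * τ') i t ht0 ht1,
    Perm.mul_apply]

end E

lemma val_finRotate {q : ℕ} (hq : 2 ≤ q) (i : Fin q) :
    ((finRotate q i : ℕ)) = ((i : ℕ) + 1) % q := by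
  obtain ⟨n, rfl⟩ : ∃ n, q = n + 1 := ⟨q - 1, by omega⟩
  rw [finRotate_succ_apply, Fin.val_add, Fin.val_one']
  conv_rhs => rw [Nat.add_mod]
  rw [Nat.mod_eq_of_lt i.isLt]

lemma coe_mod {q : ℕ} (hq : 0 < q) (a : ℕ) (t : ℝ) :
    ((((a % q : ℕ) : ℝ)/q + t : ℝ) : Circ) = (((a : ℝ)/q + t : ℝ) : Circ) := by
  rw [circ_eq_iff]
  refine ⟨-(a / q : ℕ), ?_⟩
  have h : ((a % q : ℕ) : ℝ) + q * ((a/q : ℕ) : ℝ) = a := by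
    exact_mod_cast congrArg (Nat.cast : ℕ → ℝ) (Nat.mod_add_div a q)
  have hq' : (q : ℝ) ≠ 0 := by positivity
  have h2 : ((-(a / q : ℕ) : ℤ) : ℝ) = -((a/q : ℕ) : ℝ) := by rw [Int.cast_neg, Int.cast_natCast]
  rw [h2]
  field_simp
  linarith

lemma E_sigma {q : ℕ} {E : Equiv.Perm (Fin q) → Equiv.Perm Circ}
    (hE : ∀ (τ : Equiv.Perm (Fin q)) (i : Fin q) (t : ℝ), 0 ≤ t → t < 1 / q →
      E τ ((((i : ℕ) : ℝ) / q + t : ℝ) : Circ) = ((((τ i : ℕ) : ℝ) / q + t : ℝ) : Circ))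
    (hq : 2 ≤ q) : E (finRotate q) = Rot (((q : ℝ)⁻¹ : ℝ) : Circ) := by
  have hq0 : 0 < q := by omega
  have hq' : (q : ℝ) ≠ 0 := by positivity
  ext x
  obtain ⟨i, t, ht0, ht1, rfl⟩ := rep hq0 x
  rw [hE _ i t ht0 ht1, val_finRotate hq, coe_mod hq0, Rot_apply, ← AddCircle.coe_add]
  congr 1
  push_cast
  field_simp
  ring

lemma nat_div_sub {q : ℕ} (hq : 0 < q) {a b : ℕ} (ha : a < q) {k : ℤ}
    (h : (a : ℝ)/q - (b : ℝ)/q = k) : a = b % q := by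
  have hq' : (q : ℝ) ≠ 0 := by positivity
  have h2 : (a : ℝ) = b + k * q := by field_simp at h; linarith
  have h3 : (a : ℤ) = b + k * q := by exact_mod_cast h2
  have hd : (q : ℤ) ∣ ((a : ℤ) - ((b % q : ℕ) : ℤ)) := by
    have : (a : ℤ) - ((b % q : ℕ) : ℤ) = k * q + ((b : ℤ) - ((b % q : ℕ) : ℤ)) := by
      rw [h3]; push_cast; ring
    rw [this]
    refine dvd_add ⟨k, by ring⟩ ?_
    have : ((b % q : ℕ) : ℤ) = (b : ℤ) % q := by push_cast; rfl
    rw [this]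
    exact Int.dvd_self_sub_of_emod_eq rfl
  have habs : |(a : ℤ) - ((b % q : ℕ) : ℤ)| < q := by
    have h4 : b % q < q := Nat.mod_lt b hq
    rw [abs_lt]
    constructor <;> [skip; skip] <;> omega
  have := Int.eq_zero_of_abs_lt_dvd hd habs
  omega

open Fin.NatCast in
lemma sigma_pow {n : ℕ} (k : ℕ) (i : Fin (n+1)) :
    (finRotate (n+1) ^ k) i = i + (k : Fin (n+1)) := by
  induction k with
  | zero => simp
  | succ k ih =>
    rw [pow_succ', Equiv.Perm.mul_apply, ih, finRotate_succ_apply]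
    push_cast
    rw [add_assoc]

lemma perm_eq_sigma_pow {n : ℕ} {τ : Equiv.Perm (Fin (n+1))}
    (h : ∀ i : Fin (n+1), τ i = τ 0 + i) : τ ∈ Subgroup.zpowers (finRotate (n+1)) := by
  rw [Subgroup.mem_zpowers_iff]
  refine ⟨((τ 0 : ℕ) : ℤ), ?_⟩
  rw [zpow_natCast]
  ext i
  rw [sigma_pow, Fin.cast_val_eq_self, h i, add_comm i (τ 0)]

lemma mem_zpowers_of_commute {n : ℕ} {τ : Equiv.Perm (Fin (n+1))}
    (h : τ * finRotate (n+1) = finRotate (n+1) * τ) : τ ∈ Subgroup.zpowers (finRotate (n+1)) := by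
  refine perm_eq_sigma_pow fun i => ?_
  have hc : Commute τ (finRotate (n+1)) := h
  have h2 := (hc.pow_right (i : ℕ)).eq
  have h3 := congrFun (congrArg (fun p => (p : Equiv.Perm (Fin (n+1))).toFun) h2) 0
  simp only [Equiv.toFun_as_coe, Equiv.Perm.coe_mul, Function.comp_apply] at h3
  rw [sigma_pow, sigma_pow, zero_add, Fin.cast_val_eq_self] at h3
  exact h3

lemma dense_orbit {α₀ : ℝ} (hirr : Irrational α₀) :
    Dense ((AddSubgroup.closure {α₀, (1:ℝ)} : AddSubgroup ℝ) : Set ℝ) := by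
  rcases AddSubgroup.dense_or_cyclic (AddSubgroup.closure {α₀, (1:ℝ)}) with h | ⟨a, ha⟩
  · exact h
  · exfalso
    have h1 : (1:ℝ) ∈ AddSubgroup.closure {α₀, (1:ℝ)} := AddSubgroup.subset_closure (by simp)
    have h2 : α₀ ∈ AddSubgroup.closure {α₀, (1:ℝ)} := AddSubgroup.subset_closure (by simp)
    rw [ha, AddSubgroup.mem_closure_singleton] at h1 h2
    obtain ⟨mm, hm⟩ := h1
    obtain ⟨nn, hn⟩ := h2
    rw [zsmul_eq_mul] at hm hn
    have hm0 : mm ≠ 0 := by rintro rfl; simp at hm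
    have hm0' : (mm : ℝ) ≠ 0 := Int.cast_ne_zero.mpr hm0
    refine hirr ⟨(nn : ℚ) / (mm : ℚ), ?_⟩
    push_cast
    rw [div_eq_iff hm0']
    linear_combination (mm : ℝ) * hn - (nn : ℝ) * hm

lemma exists_orbit_pt {α₀ : ℝ} (hirr : Irrational α₀) {q : ℕ} (hq : 0 < q) (i : Fin q) :
    ∃ (k : ℤ) (t : ℝ), 0 < t ∧ t < 1/q ∧
      (k • ((α₀ : ℝ) : Circ) : Circ) = ((((i : ℕ) : ℝ)/q + t : ℝ) : Circ) := by
  have hq' : (0:ℝ) < q := by exact_mod_cast hq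
  have h12 : 1/(2*(q:ℝ)) < 1/q := by rw [div_lt_div_iff₀ (by positivity) hq']; nlinarith
  have h12' : (0:ℝ) < 1/(2*(q:ℝ)) := by positivity
  obtain ⟨g, hgS, hglt⟩ := (dense_orbit hirr).exists_mem_open (isOpen_Ioo
    (a := ((i : ℕ) : ℝ)/q) (b := (((i : ℕ) : ℝ) + 1)/q))
    ⟨(((i : ℕ) : ℝ)/q + 1/(2*q)), by
      refine ⟨by linarith, ?_⟩
      rw [add_div]; linarith⟩
  obtain ⟨k, n, hkn⟩ := AddSubgroup.mem_closure_pair.mp hgS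
  refine ⟨k, g - ((i : ℕ) : ℝ)/q, by linarith [hglt.1], ?_, ?_⟩
  · have h2 := hglt.2
    rw [add_div] at h2
    linarith
  · have hg : ((g : ℝ) : Circ) = k • ((α₀ : ℝ) : Circ) := by
      rw [← hkn, AddCircle.coe_add, AddCircle.coe_zsmul, AddCircle.coe_zsmul,
        show ((1:ℝ) : Circ) = 0 from AddCircle.coe_period 1, smul_zero, add_zero]
    rw [← hg]
    congr 1
    ring

lemma irrational_of_li {s : ℕ} {α : Fin s → ℝ} (hα : LinearIndependent ℚ (Fin.cons (1 : ℝ) α))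
    (i : Fin s) : Irrational (α i) := by
  rintro ⟨r, hr⟩
  have hinj : Function.Injective (![0, i.succ] : Fin 2 → Fin (s+1)) := by
    intro a b hab
    fin_cases a <;> fin_cases b <;> simp_all [(Fin.succ_ne_zero i), (Fin.succ_ne_zero i).symm]
  have h2 := hα.comp _ hinj
  have heq : (Fin.cons (1:ℝ) α) ∘ ![0, i.succ] = ![(1:ℝ), α i] := by
    funext j; fin_cases j <;> simp
  rw [heq, LinearIndependent.pair_iff] at h2
  have h3 := (h2 r (-1) (by push_cast [Rat.smul_def]; rw [hr]; ring)).2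
  norm_num at h3

lemma fin_step {n : ℕ} {τ : Equiv.Perm (Fin (n+1))} {i : Fin (n+1)} {t : ℝ}
    (h : ((((τ i : ℕ) : ℝ)/((n+1 : ℕ) : ℝ) + t : ℝ) : Circ) =
         ((((τ 0 : ℕ) : ℝ)/((n+1 : ℕ) : ℝ) + ((((i : ℕ) : ℝ))/((n+1 : ℕ) : ℝ) + t) : ℝ) : Circ)) :
    τ i = τ 0 + i := by
  obtain ⟨k, hk⟩ := circ_eq_iff.mp h
  have hd : ((τ i : ℕ) : ℝ)/((n+1 : ℕ) : ℝ) - ((((τ 0 : ℕ) + (i : ℕ) : ℕ)) : ℝ)/((n+1 : ℕ) : ℝ)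
      = k := by
    push_cast
    push_cast at hk
    have : ((n:ℝ) + 1) ≠ 0 := by positivity
    field_simp at hk ⊢
    linarith
  have hmod := nat_div_sub (q := n+1) (by omega) (τ i).isLt hd
  apply Fin.ext
  rw [Fin.val_add]
  exact hmod

section E2
variable {n : ℕ} {E : Equiv.Perm (Fin (n+1)) → Equiv.Perm Circ}
  (hE : ∀ (τ : Equiv.Perm (Fin (n+1))) (i : Fin (n+1)) (t : ℝ), 0 ≤ t → t < 1 / ((n+1 : ℕ) : ℝ) →
      E τ ((((i : ℕ) : ℝ) / ((n+1 : ℕ) : ℝ) + t : ℝ) : Circ)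
        = ((((τ i : ℕ) : ℝ) / ((n+1 : ℕ) : ℝ) + t : ℝ) : Circ))
include hE

lemma E_zero (τ : Equiv.Perm (Fin (n+1))) :
    E τ 0 = ((((τ 0 : ℕ) : ℝ)/((n+1 : ℕ) : ℝ) + 0 : ℝ) : Circ) := by
  have hpos : (0:ℝ) < 1 / ((n+1 : ℕ) : ℝ) := by positivity
  have h0 := hE τ 0 0 le_rfl hpos
  have : ((((0 : Fin (n+1)) : ℕ) : ℝ)/((n+1 : ℕ) : ℝ) + 0 : ℝ) = 0 := by
    simp
  rw [this] at h0
  rw [show ((0:ℝ) : Circ) = 0 from rfl] at h0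
  exact h0

lemma rot_to_zpowers {τ : Equiv.Perm (Fin (n+1))} {a : Circ} (h : E τ = Rot a) :
    τ ∈ Subgroup.zpowers (finRotate (n+1)) := by
  have ha : a = ((((τ 0 : ℕ) : ℝ)/((n+1 : ℕ) : ℝ) + 0 : ℝ) : Circ) := by
    have := E_zero hE τ
    rw [h, Rot_apply, zero_add] at this
    exact this
  refine perm_eq_sigma_pow fun i => ?_
  have hpos : (0:ℝ) < 1 / ((n+1 : ℕ) : ℝ) := by positivity
  have hi := hE τ i 0 le_rfl hpos
  rw [h, Rot_apply, ha, ← AddCircle.coe_add] at hi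
  apply fin_step (t := (0:ℝ))
  rw [← hi]
  congr 1
  ring

lemma commute_rot_to_zpowers {τ : Equiv.Perm (Fin (n+1))} {α₀ : ℝ} (hirr : Irrational α₀)
    (h : E τ * Rot ((α₀ : ℝ) : Circ) = Rot ((α₀ : ℝ) : Circ) * E τ) :
    τ ∈ Subgroup.zpowers (finRotate (n+1)) := by
  refine perm_eq_sigma_pow fun i => ?_
  obtain ⟨k, t, ht0, ht1, hkt⟩ := exists_orbit_pt hirr (Nat.succ_pos n) i
  have hc : Commute (E τ) (Rot ((α₀ : ℝ) : Circ)) := h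
  have h2 := (hc.zpow_right k).eq
  have h3 := congrFun (congrArg (fun p => (p : Equiv.Perm Circ).toFun) h2) 0
  simp only [Equiv.toFun_as_coe, Equiv.Perm.coe_mul, Function.comp_apply] at h3
  rw [Rot_zpow, Rot_apply, Rot_apply, zero_add, hkt] at h3
  rw [hE τ i t (le_of_lt ht0) ht1, E_zero hE τ] at h3
  rw [← AddCircle.coe_add] at h3
  apply fin_step (t := t)
  rw [h3]
  congr 1
  ring

end E2

lemma Rot_zero : Rot (0 : Circ) = 1 := by
  ext x; simp [Rot_apply]

def RotSub : Subgroup (Equiv.Perm Circ) where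
  carrier := Set.range Rot
  one_mem' := ⟨0, Rot_zero⟩
  mul_mem' := by rintro _ _ ⟨a, rfl⟩ ⟨b, rfl⟩; exact ⟨a + b, (Rot_mul a b).symm⟩
  inv_mem' := by
    rintro _ ⟨a, rfl⟩
    refine ⟨-a, ?_⟩
    rw [eq_comm, inv_eq_iff_mul_eq_one, Rot_mul, add_neg_cancel, Rot_zero]

lemma mem_RotSub {f : Equiv.Perm Circ} : f ∈ RotSub ↔ ∃ a, Rot a = f := Iff.rfl


theorem stmt_11
    (s m q : ℕ) (hs : 1 ≤ s) (hm : 1 ≤ m) (hq : 2 ≤ q)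
    (α : Fin s → ℝ) (hα : LinearIndependent ℚ (Fin.cons (1 : ℝ) α))
    (τs : Fin m → Equiv.Perm (Fin q))
    (E : Equiv.Perm (Fin q) → Equiv.Perm Circ)
    (hE : ∀ (τ : Equiv.Perm (Fin q)) (i : Fin q) (t : ℝ), 0 ≤ t → t < 1 / q →
      E τ ((((i : ℕ) : ℝ) / q + t : ℝ) : Circ) = ((((τ i : ℕ) : ℝ) / q + t : ℝ) : Circ))
    : ((SQgrp m q τs ≤ Subgroup.zpowers (finRotate q)) ↔
        (∀ g ∈ Qgrp m q τs E, ∃ a : Circ, g = Rot a)) ∧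
      ((SQgrp m q τs ≤ Subgroup.zpowers (finRotate q)) ↔
        (∀ f ∈ Hgrp s m q α τs E, ∀ g ∈ Hgrp s m q α τs E, f * g = g * f)) ∧
      ((SQgrp m q τs ≤ Subgroup.zpowers (finRotate q)) ↔
        (∀ f ∈ Wgrp m q τs, ∀ g ∈ Wgrp m q τs, f * g = g * f)) := by
  obtain ⟨n, rfl⟩ : ∃ n, q = n + 1 := ⟨q - 1, by omega⟩
  have hgen : ∀ j, τs j ∈ SQgrp m (n+1) τs := fun j => Subgroup.subset_closure ⟨j, rfl⟩
  have hEσ : E (finRotate (n+1)) = Rot ((((n+1 : ℕ) : ℝ)⁻¹ : ℝ) : Circ) := E_sigma hE hq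
  have hErot : ∀ τ ∈ Subgroup.zpowers (finRotate (n+1)), ∃ a : Circ, E τ = Rot a := by
    intro τ hτ
    obtain ⟨k, hk⟩ := Subgroup.mem_zpowers_iff.mp hτ
    refine ⟨k • ((((n+1 : ℕ) : ℝ)⁻¹ : ℝ) : Circ), ?_⟩
    rw [← hk]
    have hmap : E (finRotate (n+1) ^ k) = (E (finRotate (n+1))) ^ k :=
      map_zpow (MonoidHom.mk' E (fun a b => E_mul hE (Nat.succ_pos n) a b)) _ _
    rw [hmap, hEσ, Rot_zpow]
  have hτW : ∀ j, τs j ∈ Wgrp m (n+1) τs := fun j => Subgroup.subset_closure (Or.inr ⟨j, rfl⟩)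
  have hσW : finRotate (n+1) ∈ Wgrp m (n+1) τs := Subgroup.subset_closure (Or.inl rfl)
  refine ⟨⟨?_, ?_⟩, ⟨?_, ?_⟩, ⟨?_, ?_⟩⟩
  · intro hSQ g hg
    have hQ : Qgrp m (n+1) τs E ≤ RotSub := by
      refine (Subgroup.closure_le _).mpr ?_
      rintro _ ⟨j, rfl⟩
      obtain ⟨a, ha⟩ := hErot _ (hSQ (hgen j))
      exact ⟨a, ha.symm⟩
    obtain ⟨a, ha⟩ := hQ hg
    exact ⟨a, ha.symm⟩
  · intro hQ
    refine (Subgroup.closure_le _).mpr ?_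
    rintro _ ⟨j, rfl⟩
    obtain ⟨a, ha⟩ := hQ (E (τs j)) (Subgroup.subset_closure ⟨j, rfl⟩)
    exact rot_to_zpowers hE ha
  · intro hSQ f hf g hg
    have hH : Hgrp s m (n+1) α τs E ≤ RotSub := by
      refine (Subgroup.closure_le _).mpr ?_
      rintro x hx
      rcases hx with ⟨i, rfl⟩ | ⟨j, rfl⟩
      · exact ⟨_, rfl⟩
      · obtain ⟨a, ha⟩ := hErot _ (hSQ (hgen j)); exact ⟨a, ha.symm⟩
    obtain ⟨a, ha⟩ := hH hf
    obtain ⟨b, hb⟩ := hH hg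
    rw [← ha, ← hb, Rot_mul, Rot_mul, add_comm]
  · intro hcomm
    refine (Subgroup.closure_le _).mpr ?_
    rintro _ ⟨j, rfl⟩
    have hfH : E (τs j) ∈ Hgrp s m (n+1) α τs E := Subgroup.subset_closure (Or.inr ⟨j, rfl⟩)
    have hrH : Rot ((α ⟨0, hs⟩ : ℝ) : Circ) ∈ Hgrp s m (n+1) α τs E :=
      Subgroup.subset_closure (Or.inl ⟨⟨0, hs⟩, rfl⟩)
    exact commute_rot_to_zpowers hE (irrational_of_li hα ⟨0, hs⟩) (hcomm _ hfH _ hrH)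
  · intro hSQ f hf g hg
    have hW : Wgrp m (n+1) τs ≤ Subgroup.zpowers (finRotate (n+1)) := by
      refine (Subgroup.closure_le _).mpr ?_
      rintro x hx
      rcases hx with rfl | ⟨j, rfl⟩
      · exact Subgroup.mem_zpowers _
      · exact hSQ (hgen j)
    obtain ⟨a, ha⟩ := Subgroup.mem_zpowers_iff.mp (hW hf)
    obtain ⟨b, hb⟩ := Subgroup.mem_zpowers_iff.mp (hW hg)
    rw [← ha, ← hb]
    exact (Commute.zpow_zpow_self _ a b).eq
  · intro hcomm
    refine (Subgroup.closure_le _).mpr ?_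
    rintro _ ⟨j, rfl⟩
    exact mem_zpowers_of_commute (hcomm _ (hτW j) _ hσW)
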